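/- Composition of lifting functions: if (L,R) is an awfs on M generated by a category J, and (f,φ),(g,ψ) are objects of J-inj (≅ R-alg) with cod f = dom g, then the formula (ψ•φ)(j,a,b) := φ(j, a, ψ(j, f∘a, b)) defines a coherent lifting function for gf: each (ψ•φ)(j,a,b) is a diagonal filler for the square (a,b): j ⇒ gf, and the coherence condition with respect to morphisms of J holds. -/
import Mathlib


open CategoryTheory

universe v u v' u'

/-- A coherent lifting function for `g` against a category `J` of arrows over the
arrow category: for each object `j` of `𝒥` and each commutative square from
`J.obj j` to `g`, a chosen diagonal filler, natural with respect to the morphisms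
of `𝒥`. -/
def IsLiftingFunction {C : Type u} [Category.{v} C] {𝒥 : Type u'} [Category.{v'} 𝒥]
    (J : 𝒥 ⥤ Arrow C) {X Y : C} (g : X ⟶ Y)
    (φ : ∀ (j : 𝒥) (u : (J.obj j).left ⟶ X) (v : (J.obj j).right ⟶ Y),
      (J.obj j).hom ≫ v = u ≫ g → ((J.obj j).right ⟶ X)) : Prop :=
  (∀ (j : 𝒥) u v h, (J.obj j).hom ≫ φ j u v h = u) ∧
  (∀ (j : 𝒥) u v h, φ j u v h ≫ g = v) ∧
  (∀ {j' j : 𝒥} (a : j' ⟶ j) u v h h',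
    φ j' ((J.map a).left ≫ u) ((J.map a).right ≫ v) h' = (J.map a).right ≫ φ j u v h)

lemma liftFun_congr {C : Type u} [Category.{v} C] {A B W V : C} {k : A ⟶ B} {g : W ⟶ V}
    (F : ∀ (u : A ⟶ W) (v : B ⟶ V), k ≫ v = u ≫ g → (B ⟶ W))
    {u u' : A ⟶ W} (hu : u = u') {v v' : B ⟶ V} (hv : v = v') (h : k ≫ v = u ≫ g)
    (h' : k ≫ v' = u' ≫ g) : F u v h = F u' v' h' := by
  subst hu; subst hv; rfl

/-- Composition of lifting functions: if `(f, φ)` and `(g, ψ)` carry coherent lifting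
functions against `J` with `cod f = dom g`, then
`(ψ • φ)(j, a, b) := φ(j, a, ψ(j, f∘a, b))` is a coherent lifting function for the
composite `f ≫ g`. -/
theorem stmt11 {C : Type u} [Category.{v} C] {𝒥 : Type u'} [Category.{v'} 𝒥]
    (J : 𝒥 ⥤ Arrow C) {X Y Z : C} (f : X ⟶ Y) (g : Y ⟶ Z)
    (φ : ∀ (j : 𝒥) (u : (J.obj j).left ⟶ X) (v : (J.obj j).right ⟶ Y),
      (J.obj j).hom ≫ v = u ≫ f → ((J.obj j).right ⟶ X))
    (ψ : ∀ (j : 𝒥) (u : (J.obj j).left ⟶ Y) (v : (J.obj j).right ⟶ Z),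
      (J.obj j).hom ≫ v = u ≫ g → ((J.obj j).right ⟶ Y))
    (hφ : IsLiftingFunction J f φ) (hψ : IsLiftingFunction J g ψ) :
    IsLiftingFunction J (f ≫ g) (fun j a b hsq =>
      φ j a (ψ j (a ≫ f) b (by rw [hsq, Category.assoc]))
        (hψ.1 j (a ≫ f) b (by rw [hsq, Category.assoc]))) := by
  obtain ⟨hφ1, hφ2, hφ3⟩ := hφ
  obtain ⟨hψ1, hψ2, hψ3⟩ := hψ
  refine ⟨fun j u v h => hφ1 _ _ _ _, fun j u v h => ?_, fun {j' j} a u v h h' => ?_⟩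
  · rw [← Category.assoc, hφ2, hψ2]
  · have hv : ψ j' (((J.map a).left ≫ u) ≫ f) ((J.map a).right ≫ v)
        (by rw [h']; simp only [Category.assoc]) =
        (J.map a).right ≫ ψ j (u ≫ f) v (by rw [h, Category.assoc]) := by
      refine (liftFun_congr (ψ j') (Category.assoc _ _ _) rfl _ ?_).trans
        (hψ3 a (u ≫ f) v (by rw [h, Category.assoc]) ?_)
      all_goals simp only [Category.assoc] at h' ⊢; exact h'
    refine (liftFun_congr (φ j') rfl hv _ ?_).trans
      (hφ3 a u (ψ j (u ≫ f) v (by rw [h, Category.assoc]))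
        (hψ1 j (u ≫ f) v (by rw [h, Category.assoc])) ?_)
    all_goals simp only [Category.assoc]; rw [← Arrow.w_assoc, hψ1]
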